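/- For every k ≥ −1 and every object (i₁, i₂, γ) of the comma category [k] ↓ σ_a, the comma category J ↓ (i₁, i₂, γ) has exactly one object, where J: {−1, 0, …, k} → ([k] ↓ σ_a) is the functor j ↦ (([j], [k−j−1]), id_{[k]}). Concretely: there exists a unique −1 ≤ j ≤ k and a unique pair of morphisms (α₁: [j] → [i₁], α₂: [k−j−1] → [i₂]) in Δ_a × Δ_a with σ_a(α₁, α₂) = γ. -/

import Mathlib

open CategoryTheory CategoryTheory.Limits Simplicial Opposite

universe v u

namespace OrdSum

/-- The "ordinal sum" of two monotone maps between finite linear orders. -/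
def ordJoin {m n m' n' : ℕ} (f : Fin m →o Fin m') (g : Fin n →o Fin n') :
    Fin (m + n) →o Fin (m' + n') where
  toFun i :=
    if h : (i : ℕ) < m then Fin.castAdd n' (f ⟨i, h⟩)
    else Fin.natAdd m' (g ⟨(i : ℕ) - m, by omega⟩)
  monotone' := by
    intro i j hij
    have hij' : (i : ℕ) ≤ (j : ℕ) := hij
    dsimp only
    by_cases hi : (i : ℕ) < m <;> by_cases hj : (j : ℕ) < m
    · simp only [dif_pos hi, dif_pos hj, Fin.le_def, Fin.coe_castAdd]
      exact f.monotone (show (⟨(i:ℕ), hi⟩ : Fin m) ≤ ⟨(j:ℕ), hj⟩ from hij')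
    · simp only [dif_pos hi, dif_neg hj, Fin.le_def, Fin.coe_castAdd, Fin.coe_natAdd]
      have := (f ⟨(i:ℕ), hi⟩).isLt
      omega
    · omega
    · simp only [dif_neg hi, dif_neg hj, Fin.le_def, Fin.coe_natAdd]
      have : (⟨(i:ℕ) - m, by omega⟩ : Fin n) ≤ ⟨(j:ℕ) - m, by omega⟩ := by
        simp only [Fin.mk_le_mk]; omega
      have := g.monotone this
      omega

theorem ordJoin_id (m n : ℕ) :
    ordJoin (OrderHom.id (α := Fin m)) (OrderHom.id (α := Fin n)) = OrderHom.id := by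
  ext i
  simp only [ordJoin, OrderHom.coe_mk, OrderHom.id_coe, id_eq]
  by_cases h : (i : ℕ) < m
  · simp [dif_pos h]
  · simp only [dif_neg h, Fin.coe_natAdd]
    omega

theorem ordJoin_comp {m n m' n' m'' n'' : ℕ}
    (f : Fin m →o Fin m') (g : Fin n →o Fin n')
    (f' : Fin m' →o Fin m'') (g' : Fin n' →o Fin n'') :
    ordJoin (f'.comp f) (g'.comp g) = (ordJoin f' g').comp (ordJoin f g) := by
  ext i
  change ((if h : (i : ℕ) < m then Fin.castAdd n'' (f' (f ⟨i, h⟩))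
      else Fin.natAdd m'' (g' (g ⟨(i : ℕ) - m, by omega⟩)) : Fin _) : ℕ) =
    ((ordJoin f' g') (if h : (i : ℕ) < m then Fin.castAdd n' (f ⟨i, h⟩)
      else Fin.natAdd m' (g ⟨(i : ℕ) - m, by omega⟩)) : ℕ)
  by_cases h : (i : ℕ) < m
  · have h1 : ((Fin.castAdd n' (f ⟨(i:ℕ), h⟩)) : ℕ) < m' := (f ⟨(i:ℕ), h⟩).isLt
    rw [dif_pos h, dif_pos h]
    change _ = ((if h : _ then _ else _ : Fin _) : ℕ)
    rw [dif_pos h1]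
    rfl
  · have h1 : ¬ ((Fin.natAdd m' (g ⟨(i:ℕ) - m, by omega⟩)) : ℕ) < m' := by
      simp only [Fin.coe_natAdd]; omega
    rw [dif_neg h, dif_neg h]
    change _ = ((if h : _ then _ else _ : Fin _) : ℕ)
    rw [dif_neg h1]
    simp only [Fin.coe_natAdd, Nat.add_right_cancel_iff]
    congr 2
    apply Fin.ext
    simp

/-- The ordinal sum functor `σ : Δ × Δ → Δ`, `([k],[l]) ↦ [k+1+l]`. -/
def ordSum : SimplexCategory × SimplexCategory ⥤ SimplexCategory where
  obj x := SimplexCategory.mk (x.1.len + 1 + x.2.len)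
  map {x y} f := SimplexCategory.Hom.mk
    (ordJoin (m := x.1.len + 1) (n := x.2.len + 1) (m' := y.1.len + 1) (n' := y.2.len + 1)
      f.1.toOrderHom f.2.toOrderHom)
  map_id x := by
    apply SimplexCategory.Hom.ext
    simp only [SimplexCategory.Hom.toOrderHom_mk]
    exact ordJoin_id _ _
  map_comp {x y z} f g := by
    apply SimplexCategory.Hom.ext
    simp only [SimplexCategory.Hom.toOrderHom_mk]
    exact ordJoin_comp _ _ _ _

/-- The augmented simplex category `Δₐ`: the object `⟨n⟩` is the linear order with `n`
elements (so `⟨0⟩` is `[-1] = ∅` and `⟨n+1⟩` is `[n]`); morphisms are monotone maps. -/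
@[ext] structure AugSimplex where
  len : ℕ

instance : Category.{0} AugSimplex where
  Hom a b := Fin a.len →o Fin b.len
  id _ := OrderHom.id
  comp f g := g.comp f

/-- The inclusion `ι : Δ → Δₐ`. -/
def incl : SimplexCategory ⥤ AugSimplex where
  obj x := ⟨x.len + 1⟩
  map f := f.toOrderHom
  map_id _ := rfl
  map_comp _ _ := rfl

/-- The ordinal sum functor `σₐ : Δₐ × Δₐ → Δₐ`. -/
def ordSumAug : AugSimplex × AugSimplex ⥤ AugSimplex where
  obj x := ⟨x.1.len + x.2.len⟩
  map f := ordJoin f.1 f.2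
  map_id _ := ordJoin_id _ _
  map_comp _ _ := ordJoin_comp _ _ _ _

variable {C : Type u} [Category.{v} C]

variable (C) in
/-- Total décalage `σ* : Fun(Δᵒᵖ, C) ⥤ Fun((Δ×Δ)ᵒᵖ, C)`, precomposition with ordinal sum. -/
def decF : (SimplexCategoryᵒᵖ ⥤ C) ⥤ ((SimplexCategory × SimplexCategory)ᵒᵖ ⥤ C) :=
  (Functor.whiskeringLeft _ _ C).obj ordSum.op

variable (C) in
/-- The functor sending a bisimplicial object `Y` to `[k] ↦ Y_{k,−}`. -/
def rowsF : ((SimplexCategory × SimplexCategory)ᵒᵖ ⥤ C) ⥤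
    (SimplexCategoryᵒᵖ ⥤ (SimplexCategoryᵒᵖ ⥤ C)) :=
  (Functor.whiskeringLeft _ _ C).obj
    (prodOpEquiv (C := SimplexCategory) (D := SimplexCategory)).inverse ⋙ Functor.curry

variable (C) in
/-- The functor sending a bisimplicial object `Y` to `[k] ↦ Y_{−,k}`. -/
def colsF : ((SimplexCategory × SimplexCategory)ᵒᵖ ⥤ C) ⥤
    (SimplexCategoryᵒᵖ ⥤ (SimplexCategoryᵒᵖ ⥤ C)) :=
  (Functor.whiskeringLeft _ _ C).obj
    (CategoryTheory.Prod.swap SimplexCategoryᵒᵖ SimplexCategoryᵒᵖ ⋙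
      (prodOpEquiv (C := SimplexCategory) (D := SimplexCategory)).inverse) ⋙ Functor.curry

/-- The simplicial object `Y_{k,−}`. -/
def rowS (Y : (SimplexCategory × SimplexCategory)ᵒᵖ ⥤ C) (k : SimplexCategory) :
    SimplexCategoryᵒᵖ ⥤ C :=
  ((rowsF C).obj Y).obj (op k)

/-- The simplicial object `Y_{−,k}`. -/
def colS (Y : (SimplexCategory × SimplexCategory)ᵒᵖ ⥤ C) (k : SimplexCategory) :
    SimplexCategoryᵒᵖ ⥤ C :=
  ((colsF C).obj Y).obj (op k)

/-- `π₀` of a simplicial object: the coequalizer of the two face maps `X₁ ⇉ X₀`. -/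
noncomputable def pi0F [HasCoequalizers C] : (SimplexCategoryᵒᵖ ⥤ C) ⥤ C where
  obj X := coequalizer (X.map (SimplexCategory.δ (1 : Fin 2)).op)
    (X.map (SimplexCategory.δ (0 : Fin 2)).op)
  map {X Y} f := coequalizer.desc (f.app (op ⦋0⦌) ≫ coequalizer.π _ _) (by
    rw [← Category.assoc, ← Category.assoc, f.naturality, f.naturality,
      Category.assoc, Category.assoc, coequalizer.condition])
  map_id X := by
    apply coequalizer.hom_ext
    simp
  map_comp f g := by
    apply coequalizer.hom_ext
    simp

/-- The canonical quotient map `X₀ → π₀(X)`. -/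
noncomputable def pi0π [HasCoequalizers C] (X : SimplexCategoryᵒᵖ ⥤ C) :
    X.obj (op ⦋0⦌) ⟶ pi0F.obj X :=
  coequalizer.π _ _

variable (C) in
/-- `Y ↦ ([k] ↦ π₀(Y_{k,−}))`. -/
noncomputable def rowsPi0F [HasCoequalizers C] :
    ((SimplexCategory × SimplexCategory)ᵒᵖ ⥤ C) ⥤ (SimplexCategoryᵒᵖ ⥤ C) :=
  rowsF C ⋙ (Functor.whiskeringRight _ _ _).obj pi0F

variable (C) in
/-- `Y ↦ ([k] ↦ π₀(Y_{−,k}))`. -/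
noncomputable def colsPi0F [HasCoequalizers C] :
    ((SimplexCategory × SimplexCategory)ᵒᵖ ⥤ C) ⥤ (SimplexCategoryᵒᵖ ⥤ C) :=
  colsF C ⋙ (Functor.whiskeringRight _ _ _).obj pi0F

variable (C) in
/-- The levelwise tensor `X ⊗ K` of a simplicial object with a simplicial set,
`(X ⊗ K)ₖ = ∐_{Kₖ} Xₖ`, as a functor in `X`. -/
noncomputable def tensorF [HasColimits C] (K : SSet.{v}) :
    (SimplexCategoryᵒᵖ ⥤ C) ⥤ (SimplexCategoryᵒᵖ ⥤ C) where
  obj X :=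
    { obj := fun n => ∐ (fun (_ : K.obj n) => X.obj n)
      map := fun {n m} f => Sigma.desc
        (fun s => X.map f ≫ Sigma.ι (fun (_ : K.obj m) => X.obj m) (K.map f s))
      map_id := fun n => by
        apply Sigma.hom_ext
        intro s
        simp [FunctorToTypes.map_id_apply]
      map_comp := fun {n m l} f g => by
        apply Sigma.hom_ext
        intro s
        simp [FunctorToTypes.map_comp_apply] }
  map {X Y} f :=
    { app := fun n => Limits.Sigma.desc
        (fun (s : K.obj n) => f.app n ≫ Sigma.ι (fun (_ : K.obj n) => Y.obj n) s)
      naturality := fun {n m} g => by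
        apply Sigma.hom_ext
        intro s
        simp }
  map_id X := by
    ext n : 1
    apply Sigma.hom_ext
    intro s
    simp
  map_comp f g := by
    ext n : 1
    apply Sigma.hom_ext
    intro s
    simp

variable (C) in
/-- The canonical projection `X ⊗ K ⟶ X`, induced by `K ⟶ Δ[0]`. -/
noncomputable def tensorProj [HasColimits C] (K : SSet.{v}) :
    tensorF C K ⟶ 𝟭 (SimplexCategoryᵒᵖ ⥤ C) where
  app X :=
    { app := fun n => Sigma.desc (fun _ => 𝟙 (X.obj n))
      naturality := fun {n m} g => by
        apply Sigma.hom_ext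
        intro s
        simp [tensorF] }
  naturality {X Y} f := by
    ext n : 1
    apply Sigma.hom_ext
    intro s
    simp [tensorF]



/-- The splitting index: `sigmaIdx β p` is the number of elements `j` of the source with
`β j < p`; equivalently `j_β + 1` where `j_β` is the largest index landing in the first block. -/
def sigmaIdx {m n : ℕ} (β : Fin m →o Fin n) (p : ℕ) : ℕ :=
  (Finset.univ.filter fun j : Fin m => ((β j) : ℕ) < p).card

theorem sigmaIdx_le {m n : ℕ} (β : Fin m →o Fin n) (p : ℕ) : sigmaIdx β p ≤ m := by
  classical
  exact le_trans (Finset.card_filter_le _ _) (by simp)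

theorem lt_sigmaIdx_iff {m n : ℕ} (β : Fin m →o Fin n) (p : ℕ) (j : Fin m) :
    (j : ℕ) < sigmaIdx β p ↔ ((β j) : ℕ) < p := by
  classical
  constructor
  · intro h
    by_contra hb
    push_neg at hb
    have hsub : (Finset.univ.filter fun j' : Fin m => ((β j') : ℕ) < p) ⊆ Finset.Iio j := by
      intro x hx
      simp only [Finset.mem_filter, Finset.mem_univ, true_and] at hx
      simp only [Finset.mem_Iio]
      by_contra hxj
      push_neg at hxj
      have hmono := β.monotone hxj
      rw [Fin.le_def] at hmono
      omega
    have hc := Finset.card_le_card hsub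
    rw [Fin.card_Iio] at hc
    exact absurd h (by unfold sigmaIdx; omega)
  · intro h
    have hsub : Finset.Iic j ⊆ (Finset.univ.filter fun j' : Fin m => ((β j') : ℕ) < p) := by
      intro x hx
      simp only [Finset.mem_Iic] at hx
      simp only [Finset.mem_filter, Finset.mem_univ, true_and]
      have hmono := β.monotone hx
      rw [Fin.le_def] at hmono
      omega
    have hc := Finset.card_le_card hsub
    rw [Fin.card_Iic] at hc
    unfold sigmaIdx
    omega

/-- The first component of the splitting of `β` at `p`. -/
def splitFst {m n : ℕ} (β : Fin m →o Fin n) (p : ℕ) : Fin (sigmaIdx β p) →o Fin p where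
  toFun r := ⟨((β ⟨r.val, lt_of_lt_of_le r.2 (sigmaIdx_le β p)⟩) : ℕ),
    (lt_sigmaIdx_iff β p _).mp r.2⟩
  monotone' := by
    intro a b hab
    have h := β.monotone (show (⟨a.val, lt_of_lt_of_le a.2 (sigmaIdx_le β p)⟩ : Fin m) ≤
      ⟨b.val, lt_of_lt_of_le b.2 (sigmaIdx_le β p)⟩ from hab)
    exact h

/-- The second component of the splitting of `β` at `p`. -/
def splitSnd {m n : ℕ} (β : Fin m →o Fin n) (p : ℕ) (hp : p ≤ n) :
    Fin (m - sigmaIdx β p) →o Fin (n - p) where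
  toFun r := ⟨((β ⟨sigmaIdx β p + r.val, by have := r.2; omega⟩) : ℕ) - p, by
    have h1 := (β ⟨sigmaIdx β p + r.val, by have := r.2; omega⟩).2
    have h2 : ¬ ((sigmaIdx β p + r.val) < sigmaIdx β p) := by omega
    have h3 := (lt_sigmaIdx_iff β p ⟨sigmaIdx β p + r.val, by have := r.2; omega⟩).not.mp
      (by simpa using h2)
    simp only [not_lt] at h3
    omega⟩
  monotone' := by
    intro a b hab
    have hav : a.val ≤ b.val := hab
    dsimp only
    simp only [Fin.mk_le_mk]
    apply Nat.sub_le_sub_right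
    exact β.monotone (Fin.mk_le_mk.mpr (by omega))


/-- The functor `J : {−1, 0, …, k} ⥤ ([k] ↓ σₐ)` sending `j` to `(([j], [k−j−1]), id)`.
Here the object `b` of `Δₐ` has `b.len` elements (so `b = [k]` with `k = b.len − 1`), the
discrete category `Fin (b.len + 1)` encodes `{−1, 0, …, k}` via `p = j + 1`, and the comma
category `[k] ↓ σₐ` is `StructuredArrow b ordSumAug`. -/
def Jfun (b : AugSimplex) :
    Discrete (Fin (b.len + 1)) ⥤ StructuredArrow b ordSumAug :=
  Discrete.functor fun p => StructuredArrow.mk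
    (Y := ((⟨p.val⟩ : AugSimplex), (⟨b.len - p.val⟩ : AugSimplex)))
    (eqToHom (by
      apply AugSimplex.ext
      have := p.2
      show b.len = p.val + (b.len - p.val)
      omega))

theorem eqToHom_apply_val {a b : AugSimplex} (e : a = b) (x : Fin a.len) :
    ((show Fin a.len →o Fin b.len from eqToHom e) x : ℕ) = x.val := by
  subst e; rfl

/-- The second component of the canonical splitting. -/
def splitSnd' {m n₁ n₂ : ℕ} (γ : Fin m →o Fin (n₁ + n₂)) :
    Fin (m - sigmaIdx γ n₁) →o Fin n₂ where
  toFun r := ⟨(γ ⟨sigmaIdx γ n₁ + r.val, by have := r.2; omega⟩ : ℕ) - n₁, by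
    have h3 := (lt_sigmaIdx_iff γ n₁ ⟨sigmaIdx γ n₁ + r.val, by have := r.2; omega⟩).not.mp
      (by simp)
    simp only [not_lt] at h3
    have := (γ ⟨sigmaIdx γ n₁ + r.val, by have := r.2; omega⟩).2
    omega⟩
  monotone' := by
    intro a b hab
    have : (a : ℕ) ≤ (b : ℕ) := hab
    simp only [Fin.mk_le_mk]
    exact Nat.sub_le_sub_right (γ.monotone (Fin.mk_le_mk.mpr (by omega))) n₁

/-- The canonical splitting tuple. -/
def mkTuple {m n₁ n₂ : ℕ} (γ : Fin m →o Fin (n₁ + n₂)) :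
    Σ q : Fin (m + 1), (Fin q.val →o Fin n₁) × (Fin (m - q.val) →o Fin n₂) :=
  ⟨⟨sigmaIdx γ n₁, by have := sigmaIdx_le γ n₁; omega⟩, splitFst γ n₁, splitSnd' γ⟩

theorem mkTuple_spec {m n₁ n₂ : ℕ} (γ : Fin m →o Fin (n₁ + n₂)) (r : Fin m) :
    ((ordJoin (mkTuple γ).2.1 (mkTuple γ).2.2)
      ⟨r.val, by have := r.2; have := (mkTuple γ).1.2; omega⟩ : ℕ) = (γ r : ℕ) := by
  simp only [mkTuple, ordJoin, OrderHom.coe_mk]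
  show ((if h : (r : ℕ) < sigmaIdx γ n₁ then Fin.castAdd n₂ ((splitFst γ n₁) ⟨r, h⟩)
    else Fin.natAdd n₁ ((splitSnd' γ) ⟨(r : ℕ) - sigmaIdx γ n₁, by have := r.2; omega⟩) :
      Fin (n₁ + n₂)) : ℕ) = _
  by_cases h : (r : ℕ) < sigmaIdx γ n₁
  · rw [dif_pos h]
    simp only [Fin.coe_castAdd, splitFst, OrderHom.coe_mk]
    rfl
  · rw [dif_neg h]
    simp only [Fin.coe_natAdd, splitSnd', OrderHom.coe_mk]
    have h3 := (lt_sigmaIdx_iff γ n₁ r).not.mp h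
    simp only [not_lt] at h3
    have : (⟨sigmaIdx γ n₁ + (r.val - sigmaIdx γ n₁), by have := r.2; omega⟩ : Fin m) = r := by
      apply Fin.ext; simp; omega
    show n₁ + ((γ ⟨sigmaIdx γ n₁ + (r.val - sigmaIdx γ n₁), by have := r.2; omega⟩ : ℕ) - n₁) = _
    rw [this]
    omega

theorem tuple_unique {m n₁ n₂ : ℕ} (γ : Fin m →o Fin (n₁ + n₂))
    (t : Σ q : Fin (m + 1), (Fin q.val →o Fin n₁) × (Fin (m - q.val) →o Fin n₂))
    (ht : ∀ r : Fin m, ((ordJoin t.2.1 t.2.2)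
      ⟨r.val, by have := r.2; have := t.1.2; omega⟩ : ℕ) = (γ r : ℕ)) :
    t = mkTuple γ := by
  obtain ⟨⟨q, hq⟩, α₁, α₂⟩ := t
  have key : ∀ r : Fin m, ((γ r : ℕ) < n₁ ↔ (r : ℕ) < q) := by
    intro r
    have h := ht r
    simp only [ordJoin, OrderHom.coe_mk] at h
    by_cases hr : (r : ℕ) < q
    · rw [dif_pos hr] at h
      simp only [Fin.coe_castAdd] at h
      have := (α₁ ⟨r.val, hr⟩).2
      omega
    · rw [dif_neg hr] at h
      simp only [Fin.coe_natAdd] at h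
      omega
  have hqs : q = sigmaIdx γ n₁ := by
    have hs := sigmaIdx_le γ n₁
    by_contra hne
    rcases Nat.lt_or_ge q (sigmaIdx γ n₁) with hlt | hge
    · have h0 : ((⟨q, by omega⟩ : Fin m) : ℕ) < sigmaIdx γ n₁ := hlt
      have h1 := (lt_sigmaIdx_iff γ n₁ ⟨q, by omega⟩).mp h0
      have h2 := (key ⟨q, by omega⟩).mp h1
      simp at h2
    · have hlt : sigmaIdx γ n₁ < q := by omega
      have h1 : ((γ ⟨sigmaIdx γ n₁, by omega⟩ : Fin (n₁ + n₂)) : ℕ) < n₁ :=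
        (key ⟨sigmaIdx γ n₁, by omega⟩).mpr hlt
      have h2 := (lt_sigmaIdx_iff γ n₁ ⟨sigmaIdx γ n₁, by omega⟩).mpr h1
      simp at h2
  subst hqs
  have e₁ : α₁ = (mkTuple γ).2.1 := by
    ext s
    have hs2 : (s : ℕ) < sigmaIdx γ n₁ := s.2
    have h := ht ⟨s.val, by omega⟩
    simp only [ordJoin, OrderHom.coe_mk] at h
    rw [dif_pos hs2] at h
    simp only [Fin.coe_castAdd] at h
    have hs : (⟨(s : ℕ), s.2⟩ : Fin (sigmaIdx γ n₁)) = s := rfl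
    rw [hs] at h
    rw [h]
    simp only [mkTuple, splitFst, OrderHom.coe_mk]
    rfl
  have e₂ : α₂ = (mkTuple γ).2.2 := by
    ext s
    have hs2 : (s : ℕ) < m - sigmaIdx γ n₁ := s.2
    have h := ht ⟨sigmaIdx γ n₁ + s.val, by omega⟩
    simp only [ordJoin, OrderHom.coe_mk] at h
    rw [dif_neg (by omega)] at h
    simp only [Fin.coe_natAdd] at h
    have hs : (⟨sigmaIdx γ n₁ + (s : ℕ) - sigmaIdx γ n₁, by omega⟩ :
        Fin (m - sigmaIdx γ n₁)) = s := by
      apply Fin.ext; simp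
    rw [hs] at h
    simp only [mkTuple, splitSnd', OrderHom.coe_mk]
    show (α₂ s : ℕ) = (γ ⟨sigmaIdx γ n₁ + s.val, by omega⟩ : ℕ) - n₁
    omega
  simp only [mkTuple] at e₁ e₂ ⊢
  rw [e₁, e₂]

theorem comma_unique_obj (b : AugSimplex) (c : StructuredArrow b ordSumAug)
    (γ : Fin b.len →o Fin (c.right.1.len + c.right.2.len)) (hγ : c.hom = γ) :
    Nonempty (Unique (CostructuredArrow (Jfun b) c)) := by
  have happ : ∀ (q : Fin (b.len + 1))
      (α : ((((⟨q.val⟩ : AugSimplex), (⟨b.len - q.val⟩ : AugSimplex))) :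
          AugSimplex × AugSimplex) ⟶ c.right) (r : Fin b.len),
      ((ordJoin α.1 α.2) ⟨r.val, by
          have := r.2; have := q.2; show r.val < q.val + (b.len - q.val); omega⟩ : ℕ) =
      ((show Fin b.len →o Fin (c.right.1.len + c.right.2.len) from
        ((Jfun b).obj ⟨q⟩).hom ≫ ordSumAug.map α) r : ℕ) := by
    intro q α r
    have e : b = ordSumAug.obj ((⟨q.val⟩ : AugSimplex), (⟨b.len - q.val⟩ : AugSimplex)) := by
      apply AugSimplex.ext
      have := q.2
      show b.len = q.val + (b.len - q.val)
      omega
    show ((ordJoin α.1 α.2) _ : ℕ) = ((ordJoin α.1 α.2)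
      ((show Fin b.len →o Fin (q.val + (b.len - q.val)) from eqToHom e) r) : ℕ)
    have heq : (show Fin b.len →o Fin (q.val + (b.len - q.val)) from eqToHom e) r
        = ⟨r.val, by have := r.2; have := q.2; omega⟩ := Fin.ext (eqToHom_apply_val e r)
    rw [heq]
  have hex : ∀ (q : Fin (b.len + 1)) (f : (Jfun b).obj ⟨q⟩ ⟶ c),
      (⟨q, ((show Fin q.val →o Fin c.right.1.len from f.right.1),
            (show Fin (b.len - q.val) →o Fin c.right.2.len from f.right.2))⟩ :
        Σ q : Fin (b.len + 1), (Fin q.val →o Fin c.right.1.len) ×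
          (Fin (b.len - q.val) →o Fin c.right.2.len)) = mkTuple γ := by
    intro q f
    apply tuple_unique
    intro r
    have h1 := happ q f.right r
    have h2 := StructuredArrow.w f
    rw [← hγ, ← h2]
    exact h1
  set q₀ := (mkTuple γ).1 with hq₀
  have w0 : ((Jfun b).obj ⟨q₀⟩).hom ≫ ordSumAug.map
      (show ((((⟨q₀.val⟩ : AugSimplex), (⟨b.len - q₀.val⟩ : AugSimplex))) :
        AugSimplex × AugSimplex) ⟶ c.right from ((mkTuple γ).2.1, (mkTuple γ).2.2)) =
      c.hom := by
    apply OrderHom.ext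
    funext r
    apply Fin.ext
    have h1 := happ q₀ (show _ ⟶ c.right from ((mkTuple γ).2.1, (mkTuple γ).2.2)) r
    refine h1.symm.trans ((mkTuple_spec γ r).trans ?_)
    rw [hγ]
    rfl
  let X₀ : CostructuredArrow (Jfun b) c :=
    CostructuredArrow.mk (Y := (⟨q₀⟩ : Discrete (Fin (b.len + 1))))
      (StructuredArrow.homMk
        (show ((((⟨q₀.val⟩ : AugSimplex), (⟨b.len - q₀.val⟩ : AugSimplex))) :
          AugSimplex × AugSimplex) ⟶ c.right from ((mkTuple γ).2.1, (mkTuple γ).2.2)) w0)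
  have obj_eq : ∀ X Y : CostructuredArrow (Jfun b) c, X = Y := by
    intro X Y
    obtain ⟨lX, rX, fX⟩ := X
    obtain ⟨lY, rY, fY⟩ := Y
    obtain ⟨qX⟩ := lX
    obtain ⟨qY⟩ := lY
    obtain ⟨⟨⟩⟩ := rX
    obtain ⟨⟨⟩⟩ := rY
    have h1 := hex qX fX
    have h2 := hex qY fY
    have h := h1.trans h2.symm
    obtain rfl : qX = qY := congrArg Sigma.fst h
    have h3 : fX.right = fY.right := by
      exact eq_of_heq (Sigma.mk.inj_iff.mp h).2
    have h4 : fX = fY := StructuredArrow.hom_ext _ _ h3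
    rw [h4]
  exact ⟨⟨⟨X₀⟩, fun X => obj_eq X X₀⟩⟩

/-- **(From the proof of Lemma 2.13.)**
For every `k ≥ −1` (every object `b` of `Δₐ`) and every object `c = (i₁, i₂, γ)` of the comma
category `[k] ↓ σₐ`, the comma category `J ↓ c` has exactly one object.  Concretely, there is
a unique `−1 ≤ j ≤ k` (encoded by `q = j+1 : Fin (b.len + 1)`) and a unique pair of morphisms
`(α₁ : [j] → [i₁], α₂ : [k−j−1] → [i₂])` in `Δₐ × Δₐ` with `σₐ(α₁, α₂) = γ`. -/
theorem comma_under_discrete_has_one_object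
    (b : AugSimplex) (c : StructuredArrow b ordSumAug) :
    Nonempty (Unique (CostructuredArrow (Jfun b) c)) ∧
    (∃! t : Σ q : Fin (b.len + 1),
        ((⟨q.val⟩ : AugSimplex) ⟶ c.right.1) × ((⟨b.len - q.val⟩ : AugSimplex) ⟶ c.right.2),
      ∀ r : Fin b.len,
        ((ordJoin t.2.1 t.2.2) ⟨r.val, by
          have := r.2
          have := t.1.2
          show r.val < t.1.val + (b.len - t.1.val)
          omega⟩ : ℕ) =
          ((show Fin b.len →o Fin (c.right.1.len + c.right.2.len) from c.hom) r : ℕ)) := by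
  refine ⟨comma_unique_obj b c
    (show Fin b.len →o Fin (c.right.1.len + c.right.2.len) from c.hom) rfl, ?_⟩
  exact ⟨mkTuple (show Fin b.len →o Fin (c.right.1.len + c.right.2.len) from c.hom),
    fun r => mkTuple_spec _ r, fun t ht => tuple_unique _ t ht⟩

end OrdSum
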